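/- Let k ≥ 2 and let A_1, …, A_k be finite nonempty sets of integers. For each i let A_i' be the two-element (or one-element, if A_i is a singleton) set consisting of the smallest and the largest elements of A_i. Put S = A_1 + ⋯ + A_k, S_i = A_1 + ⋯ + A_{i−1} + A_{i+1} + ⋯ + A_k (the sum omitting A_i), S_i' = A_1 + ⋯ + A_{i−1} + A_i' + A_{i+1} + ⋯ + A_k, and S' = ⋃_{i=1}^k S_i'. Then |S| ≥ |S'| ≥ (1/(k−1))·Σ_{i=1}^k |S_i| − 1/(k−1). -/
import Mathlib


open Pointwise

private lemma psum_lower {ι : Type*} [DecidableEq ι] (s : Finset ι) (A : ι → Finset ℤ)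
    (g : ι → ℤ) (hg : ∀ j ∈ s, ∀ y ∈ A j, g j ≤ y) :
    ∀ x ∈ ∑ j ∈ s, A j, ∑ j ∈ s, g j ≤ x := by
  induction s using Finset.cons_induction with
  | empty =>
    intro x hx
    simp only [Finset.sum_empty] at hx ⊢
    rw [Finset.mem_zero] at hx
    omega
  | cons j s hj ih =>
    intro x hx
    rw [Finset.sum_cons] at hx
    rw [Finset.sum_cons]
    obtain ⟨y, hy, z, hz, rfl⟩ := Finset.mem_add.mp hx
    have h1 := ih (fun j' hj' y' hy' => hg j' (Finset.mem_cons_of_mem hj') y' hy') z hz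
    have h2 := hg j (Finset.mem_cons_self j s) y hy
    omega

private lemma psum_upper {ι : Type*} [DecidableEq ι] (s : Finset ι) (A : ι → Finset ℤ)
    (g : ι → ℤ) (hg : ∀ j ∈ s, ∀ y ∈ A j, y ≤ g j) :
    ∀ x ∈ ∑ j ∈ s, A j, x ≤ ∑ j ∈ s, g j := by
  induction s using Finset.cons_induction with
  | empty =>
    intro x hx
    simp only [Finset.sum_empty] at hx ⊢
    rw [Finset.mem_zero] at hx
    omega
  | cons j s hj ih =>
    intro x hx
    rw [Finset.sum_cons] at hx
    rw [Finset.sum_cons]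
    obtain ⟨y, hy, z, hz, rfl⟩ := Finset.mem_add.mp hx
    have h1 := ih (fun j' hj' y' hy' => hg j' (Finset.mem_cons_of_mem hj') y' hy') z hz
    have h2 := hg j (Finset.mem_cons_self j s) y hy
    omega

theorem subsums_superadditivity (k : ℕ) (hk : 2 ≤ k)
    (A : Fin k → Finset ℤ) (hA : ∀ i, (A i).Nonempty)
    (A' : Fin k → Finset ℤ)
    (hA' : ∀ i, A' i = {(A i).min' (hA i), (A i).max' (hA i)})
    (S : Finset ℤ) (hS : S = ∑ i, A i)
    (Si : Fin k → Finset ℤ)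
    (hSi : ∀ i, Si i = ∑ j ∈ Finset.univ.erase i, A j)
    (Si' : Fin k → Finset ℤ)
    (hSi' : ∀ i, Si' i = A' i + Si i)
    (S' : Finset ℤ) (hS' : S' = Finset.univ.biUnion Si') :
    (S.card : ℚ) ≥ (S'.card : ℚ) ∧
    (S'.card : ℚ) ≥ (1 / ((k : ℚ) - 1)) * ∑ i, ((Si i).card : ℚ) - 1 / ((k : ℚ) - 1) := by
  obtain ⟨m, rfl⟩ : ∃ m, k = m + 2 := ⟨k - 2, by omega⟩
  set a : Fin (m + 2) → ℤ := fun i => (A i).min' (hA i) with ha_def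
  set b : Fin (m + 2) → ℤ := fun i => (A i).max' (hA i) with hb_def
  have haA : ∀ i, a i ∈ A i := fun i => (A i).min'_mem (hA i)
  have hbA : ∀ i, b i ∈ A i := fun i => (A i).max'_mem (hA i)
  have haA' : ∀ i, a i ∈ A' i := by
    intro i; rw [hA' i]; exact Finset.mem_insert_self _ _
  have hbA' : ∀ i, b i ∈ A' i := by
    intro i; rw [hA' i]; exact Finset.mem_insert_of_mem (Finset.mem_singleton_self _)
  have hSsum : ∀ i, A i + Si i = S := by
    intro i; rw [hS, hSi i]; exact Finset.add_sum_erase _ A (Finset.mem_univ i)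
  have hS'sub : S' ⊆ S := by
    rw [hS']
    intro x hx
    obtain ⟨i, -, hx⟩ := Finset.mem_biUnion.mp hx
    rw [hSi' i] at hx
    have hsub : A' i ⊆ A i := by
      rw [hA' i]
      intro y hy
      rcases Finset.mem_insert.mp hy with h | h
      · rw [h]; exact haA i
      · rw [Finset.mem_singleton.mp h]; exact hbA i
    rw [← hSsum i]
    exact Finset.add_subset_add hsub Finset.Subset.rfl hx
  have hmemS' : ∀ i : Fin (m + 2), ∀ t ∈ A' i, ∀ x ∈ Si i, t + x ∈ S' := by
    intro i t ht x hx
    rw [hS']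
    exact Finset.mem_biUnion.mpr ⟨i, Finset.mem_univ i,
      by rw [hSi' i]; exact Finset.add_mem_add ht hx⟩
  have hlow : ∀ i, ∀ x ∈ Si i, ∑ j ∈ Finset.univ.erase i, a j ≤ x := by
    intro i x hx
    rw [hSi i] at hx
    exact psum_lower _ A a (fun j _ y hy => (A j).min'_le y hy) x hx
  have hup : ∀ i, ∀ x ∈ Si i, x ≤ ∑ j ∈ Finset.univ.erase i, b j := by
    intro i x hx
    rw [hSi i] at hx
    exact psum_upper _ A b (fun j _ y hy => (A j).le_max' y hy) x hx
  set M : ℤ := ∑ j, a j with hM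
  set c : ℕ → ℤ :=
    fun n => M + ∑ j ∈ Finset.univ.filter (fun j : Fin (m + 2) => (j : ℕ) < n), (b j - a j)
    with hc
  set B : Fin (m + 2) → Finset ℤ :=
    fun i => (Si i).filter (fun x => a i + x ≤ c (i : ℕ)) with hBdef
  set T : Fin (m + 2) → Finset ℤ :=
    fun i => (Si i).filter (fun x => ¬(a i + x ≤ c (i : ℕ))) with hTdef
  have hsplit : ∀ i, (Si i).card = (B i).card + (T i).card := by
    intro i
    exact (Finset.card_filter_add_card_filter_not
      (fun x => a i + x ≤ c (i : ℕ))).symm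
  have hcstep : ∀ i : Fin (m + 2), c ((i : ℕ) + 1) = c (i : ℕ) + (b i - a i) := by
    intro i
    have hins : Finset.univ.filter (fun j : Fin (m + 2) => (j : ℕ) < (i : ℕ) + 1)
        = insert i (Finset.univ.filter (fun j : Fin (m + 2) => (j : ℕ) < (i : ℕ))) := by
      ext j
      simp only [Finset.mem_filter, Finset.mem_univ, true_and, Finset.mem_insert, Fin.ext_iff]
      omega
    simp only [hc]
    rw [hins, Finset.sum_insert (by simp)]
    ring
  have hpair : ∀ i : Fin (m + 1), (B i.succ).card + (T i.castSucc).card ≤ S'.card := by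
    intro i
    set U := (B i.succ).image (fun x => a i.succ + x) with hU
    set V := (T i.castSucc).image (fun x => b i.castSucc + x) with hV
    have hUS : U ⊆ S' := by
      intro y hy
      obtain ⟨x, hx, rfl⟩ := Finset.mem_image.mp hy
      exact hmemS' _ _ (haA' _) _ (Finset.mem_of_mem_filter x hx)
    have hVS : V ⊆ S' := by
      intro y hy
      obtain ⟨x, hx, rfl⟩ := Finset.mem_image.mp hy
      exact hmemS' _ _ (hbA' _) _ (Finset.mem_of_mem_filter x hx)
    have hval : ((i.succ : Fin (m + 2)) : ℕ) = ((i.castSucc : Fin (m + 2)) : ℕ) + 1 := by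
      simp
    have hUc : ∀ y ∈ U, y ≤ c ((i.succ : Fin (m + 2)) : ℕ) := by
      intro y hy
      obtain ⟨x, hx, rfl⟩ := Finset.mem_image.mp hy
      exact (Finset.mem_filter.mp hx).2
    have hVc : ∀ y ∈ V, ¬(y ≤ c ((i.succ : Fin (m + 2)) : ℕ)) := by
      intro y hy
      obtain ⟨x, hx, rfl⟩ := Finset.mem_image.mp hy
      have h2 := (Finset.mem_filter.mp hx).2
      have h3 := hcstep i.castSucc
      rw [hval, h3]
      push_neg at h2 ⊢
      linarith
    have hdisj : Disjoint U V := by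
      rw [Finset.disjoint_left]
      intro y hy hyV
      exact hVc y hyV (hUc y hy)
    have hcardU : U.card = (B i.succ).card :=
      Finset.card_image_of_injective _ (add_right_injective _)
    have hcardV : V.card = (T i.castSucc).card :=
      Finset.card_image_of_injective _ (add_right_injective _)
    calc (B i.succ).card + (T i.castSucc).card = U.card + V.card := by rw [hcardU, hcardV]
      _ = (U ∪ V).card := (Finset.card_union_of_disjoint hdisj).symm
      _ ≤ S'.card := Finset.card_le_card (Finset.union_subset hUS hVS)
  have hB0 : (B 0).card ≤ 1 := by
    have hsub : B 0 ⊆ {M - a 0} := by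
      intro x hx
      obtain ⟨hxS, hxle⟩ := Finset.mem_filter.mp hx
      have h1 := hlow 0 x hxS
      have h2 : a 0 + ∑ j ∈ Finset.univ.erase 0, a j = M :=
        Finset.add_sum_erase _ a (Finset.mem_univ 0)
      have h3 : c 0 = M := by simp [hc]
      simp only [Fin.val_zero] at hxle
      rw [h3] at hxle
      rw [Finset.mem_singleton]
      omega
    calc (B 0).card ≤ ({M - a 0} : Finset ℤ).card := Finset.card_le_card hsub
      _ = 1 := Finset.card_singleton _
  have hTlast : (T (Fin.last (m + 1))).card = 0 := by
    rw [Finset.card_eq_zero]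
    apply Finset.filter_eq_empty_iff.mpr
    intro x hx
    rw [not_not]
    have hxup := hup (Fin.last (m + 1)) x hx
    have hfl : Finset.univ.filter (fun j : Fin (m + 2) => (j : ℕ) < m + 1)
        = Finset.univ.erase (Fin.last (m + 1)) := by
      ext j
      simp only [Finset.mem_filter, Finset.mem_univ, true_and, Finset.mem_erase, and_true]
      constructor
      · intro hlt hEq
        rw [hEq] at hlt
        simp at hlt
      · intro hne
        have h1 := j.isLt
        rcases Nat.lt_succ_iff_lt_or_eq.mp h1 with h | h
        · exact h
        · exact absurd (Fin.ext (by simp [h])) hne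
    have h2 : a (Fin.last (m + 1)) + ∑ j ∈ Finset.univ.erase (Fin.last (m + 1)), a j = M :=
      Finset.add_sum_erase _ a (Finset.mem_univ _)
    have h3 : c (m + 1) = a (Fin.last (m + 1)) +
        ∑ j ∈ Finset.univ.erase (Fin.last (m + 1)), b j := by
      simp only [hc, hfl]
      rw [Finset.sum_sub_distrib]
      linear_combination -h2
    rw [show ((Fin.last (m + 1) : Fin (m + 2)) : ℕ) = m + 1 from by simp, h3]
    linarith
  have hkey : ∑ i, (Si i).card ≤ (m + 1) * S'.card + 1 := by
    have e1 : ∑ i, (Si i).card = ∑ i, ((B i).card + (T i).card) :=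
      Finset.sum_congr rfl (fun i _ => hsplit i)
    have e2 : ∑ i, ((B i).card + (T i).card) = ∑ i, (B i).card + ∑ i, (T i).card :=
      Finset.sum_add_distrib
    have e3 : ∑ i, (B i).card = (B 0).card + ∑ i : Fin (m + 1), (B i.succ).card :=
      Fin.sum_univ_succ _
    have e4 : ∑ i, (T i).card
        = (∑ i : Fin (m + 1), (T i.castSucc).card) + (T (Fin.last (m + 1))).card :=
      Fin.sum_univ_castSucc _
    have e5 : ∑ i : Fin (m + 1), (B i.succ).card + ∑ i : Fin (m + 1), (T i.castSucc).card
        ≤ (m + 1) * S'.card := by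
      rw [← Finset.sum_add_distrib]
      calc ∑ i : Fin (m + 1), ((B i.succ).card + (T i.castSucc).card)
          ≤ ∑ _i : Fin (m + 1), S'.card := Finset.sum_le_sum (fun i _ => hpair i)
        _ = (m + 1) * S'.card := by
            rw [Finset.sum_const, Finset.card_univ, Fintype.card_fin, smul_eq_mul]
    omega
  constructor
  · exact_mod_cast Finset.card_le_card hS'sub
  · have hq : (∑ i, ((Si i).card : ℚ)) ≤ ((m : ℚ) + 1) * (S'.card : ℚ) + 1 := by
      have := hkey
      have hcast : ((∑ i, (Si i).card : ℕ) : ℚ) ≤ (((m + 1) * S'.card + 1 : ℕ) : ℚ) := by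
        exact_mod_cast this
      push_cast at hcast
      convert hcast using 2
    have hpos : (0 : ℚ) < ((m + 2 : ℕ) : ℚ) - 1 := by push_cast; linarith
    rw [ge_iff_le]
    have hre : 1 / (((m + 2 : ℕ) : ℚ) - 1) * ∑ i, ((Si i).card : ℚ)
        - 1 / (((m + 2 : ℕ) : ℚ) - 1)
        = ((∑ i, ((Si i).card : ℚ)) - 1) / (((m + 2 : ℕ) : ℚ) - 1) := by ring
    rw [hre, div_le_iff₀ hpos]
    push_cast
    linarith
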